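/- Fix r > 1, reals β > α ≥ 1, and a prime p. Let a_0 be the least nonnegative integer with σ_{-r}(p^{a_0+1})/σ_{-r}(p^{a_0}) ≤ β/α. For 0 ≤ a < a_0 set J_a = σ_{-r}(p^a)·[α, β], and set J_{a_0} = [σ_{-r}(p^{a_0})·α, (1/(1 - p^{-r}))·β]. Then the intervals J_0, …, J_{a_0} are pairwise disjoint and the union over a ∈ ℕ ∪ {∞} of σ_{-r}(p^a)·[α, β] equals J_0 ∪ ⋯ ∪ J_{a_0}. -/

import Mathlib

noncomputable def sigma' (r : ℝ) (n : ℕ) : ℝ := ∑ d ∈ n.divisors, (d : ℝ) ^ (-r)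

lemma sigma'_prime_pow (r : ℝ) {p : ℕ} (hp : p.Prime) (a : ℕ) :
    sigma' r (p ^ a) = ∑ i ∈ Finset.range (a + 1), ((p : ℝ) ^ (-r)) ^ i := by
  unfold sigma'
  rw [Nat.sum_divisors_prime_pow hp]
  refine Finset.sum_congr rfl fun i _ => ?_
  have hp0 : (0:ℝ) ≤ (p:ℝ) := by positivity
  push_cast
  rw [← Real.rpow_natCast (p:ℝ) i, ← Real.rpow_natCast ((p:ℝ) ^ (-r)) i,
    ← Real.rpow_mul hp0, ← Real.rpow_mul hp0, mul_comm]

theorem stmt12 (r α β : ℝ) (hr : 1 < r) (hα : 1 ≤ α) (hαβ : α < β)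
    (p : ℕ) (hp : p.Prime) (a0 : ℕ)
    (ha0 : sigma' r (p ^ (a0 + 1)) / sigma' r (p ^ a0) ≤ β / α)
    (ha0min : ∀ a < a0, β / α < sigma' r (p ^ (a + 1)) / sigma' r (p ^ a)) :
    let J : ℕ → Set ℝ := fun a =>
      if a < a0 then Set.Icc (sigma' r (p ^ a) * α) (sigma' r (p ^ a) * β)
      else Set.Icc (sigma' r (p ^ a0) * α) ((1 - (p : ℝ) ^ (-r))⁻¹ * β)
    (∀ a ≤ a0, ∀ b ≤ a0, a ≠ b → Disjoint (J a) (J b)) ∧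
      ((⋃ a : ℕ, Set.Icc (sigma' r (p ^ a) * α) (sigma' r (p ^ a) * β)) ∪
          Set.Icc ((1 - (p : ℝ) ^ (-r))⁻¹ * α) ((1 - (p : ℝ) ^ (-r))⁻¹ * β)) =
        ⋃ a ∈ Finset.range (a0 + 1), J a := by
  classical
  intro J
  set q : ℝ := (p:ℝ) ^ (-r) with hqdef
  have hp1 : (1:ℝ) < (p:ℝ) := by exact_mod_cast hp.one_lt
  have hq0 : 0 < q := Real.rpow_pos_of_pos (by linarith) _
  have hq1 : q < 1 := Real.rpow_lt_one_of_one_lt_of_neg hp1 (by linarith)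
  set S : ℕ → ℝ := fun a => ∑ i ∈ Finset.range (a + 1), q ^ i with hSdef
  have hS : ∀ a, sigma' r (p ^ a) = S a := fun a => sigma'_prime_pow r hp a
  have hSsucc : ∀ a, S (a + 1) = S a + q ^ (a + 1) := fun a => Finset.sum_range_succ _ _
  have hSstrict : StrictMono S := strictMono_nat_of_lt_succ fun a => by
    rw [hSsucc]; nlinarith [pow_pos hq0 (a + 1)]
  have hSmono : Monotone S := hSstrict.monotone
  have hS1 : ∀ a, 1 ≤ S a := by
    intro a
    have : S 0 = 1 := by simp [hSdef]
    calc (1:ℝ) = S 0 := this.symm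
      _ ≤ S a := hSmono (Nat.zero_le a)
  have hSpos : ∀ a, 0 < S a := fun a => lt_of_lt_of_le one_pos (hS1 a)
  have hα0 : (0:ℝ) < α := by linarith
  have hβ0 : (0:ℝ) < β := by linarith
  have h1q : 0 < 1 - q := by linarith
  have htend : Filter.Tendsto S Filter.atTop (nhds ((1 - q)⁻¹)) := by
    have h := (hasSum_geometric_of_lt_one hq0.le hq1).tendsto_sum_nat
    exact h.comp (Filter.tendsto_add_atTop_nat 1)
  have hSle : ∀ a, S a ≤ (1 - q)⁻¹ := hSmono.ge_of_tendsto htend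
  have hSlt : ∀ a, S a < (1 - q)⁻¹ :=
    fun a => lt_of_lt_of_le (hSstrict (Nat.lt_succ_self a)) (hSle (a + 1))
  -- key inequalities
  have key1 : ∀ a < a0, S a * β < S (a + 1) * α := by
    intro a ha
    have h := ha0min a ha
    rw [hS, hS, div_lt_div_iff₀ hα0 (hSpos a)] at h
    linarith [h]
  have key0 : S (a0 + 1) * α ≤ S a0 * β := by
    have h := ha0
    rw [hS, hS, div_le_div_iff₀ (hSpos a0) hα0] at h
    linarith [h]
  have key2 : ∀ a, a0 ≤ a → S (a + 1) * α ≤ S a * β := by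
    intro a ha
    have h1 : q ^ (a + 1) ≤ q ^ (a0 + 1) :=
      pow_le_pow_of_le_one hq0.le hq1.le (by omega)
    have h2 : S a0 ≤ S a := hSmono ha
    have h3 : q ^ (a0 + 1) * α ≤ S a0 * (β - α) := by
      have := hSsucc a0; nlinarith [key0]
    have := hSsucc a
    nlinarith
  -- lower bound of J b for b ≤ a0
  have hJlow : ∀ b ≤ a0, ∀ x ∈ J b, S b * α ≤ x := by
    intro b hb x hx
    by_cases hb' : b < a0
    · simp only [J, if_pos hb', Set.mem_Icc, hS] at hx
      exact hx.1
    · have : b = a0 := by omega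
      subst this
      simp only [J, if_neg hb', Set.mem_Icc, hS] at hx
      exact hx.1
  constructor
  · -- disjointness
    have main : ∀ a b, a ≤ a0 → b ≤ a0 → a < b → Disjoint (J a) (J b) := by
      intro a b ha hb hab
      have ha' : a < a0 := by omega
      rw [Set.disjoint_left]
      intro x hxa hxb
      have h1 : x ≤ S a * β := by
        simp only [J, if_pos ha', Set.mem_Icc, hS] at hxa
        exact hxa.2
      have h2 : S b * α ≤ x := hJlow b hb x hxb
      have h3 : S (a + 1) * α ≤ S b * α :=
        mul_le_mul_of_nonneg_right (hSmono (by omega)) hα0.le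
      have := key1 a ha'
      linarith
    intro a ha b hb hab
    rcases hab.lt_or_gt with h | h
    · exact main a b ha hb h
    · exact (main b a hb ha h).symm
  · -- the union
    ext x
    simp only [Set.mem_union, Set.mem_iUnion, Set.mem_Icc, Finset.mem_range]
    constructor
    · rintro (⟨a, hxa⟩ | hx)
      · rw [hS] at hxa
        by_cases haa : a < a0
        · exact ⟨a, by omega, by simp only [J, if_pos haa, Set.mem_Icc, hS]; exact hxa⟩
        · refine ⟨a0, by omega, ?_⟩
          simp only [J, lt_irrefl, if_neg (lt_irrefl a0), Set.mem_Icc, hS]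
          have hle : S a0 ≤ S a := hSmono (by omega)
          constructor
          · nlinarith [hxa.1]
          · nlinarith [hxa.2, hSle a]
      · refine ⟨a0, by omega, ?_⟩
        simp only [J, if_neg (lt_irrefl a0), Set.mem_Icc, hS]
        constructor
        · nlinarith [hx.1, hSle a0]
        · exact hx.2
    · rintro ⟨a, ha, hxa⟩
      by_cases haa : a < a0
      · left
        simp only [J, if_pos haa, Set.mem_Icc, hS] at hxa
        exact ⟨a, by rw [hS]; exact hxa⟩
      · simp only [J, if_neg haa, Set.mem_Icc, hS] at hxa
        by_cases hup : (1 - q)⁻¹ * α ≤ x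
        · right; exact ⟨hup, hxa.2⟩
        · left
          push_neg at hup
          have hex : ∃ n, x < S n * α := by
            have ht : Filter.Tendsto (fun n => S n * α) Filter.atTop
                (nhds ((1 - q)⁻¹ * α)) := htend.mul_const α
            exact (ht.eventually (eventually_gt_nhds hup)).exists
          have hc : x < S (Nat.find hex) * α := Nat.find_spec hex
          have hc0 : a0 < Nat.find hex := by
            by_contra h
            push_neg at h
            have h2 : S (Nat.find hex) ≤ S a0 := hSmono h
            nlinarith [hxa.1]
          obtain ⟨b, hb⟩ : ∃ b, Nat.find hex = b + 1 := ⟨Nat.find hex - 1, by omega⟩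
          have hbnot : ¬ (x < S b * α) := Nat.find_min hex (by omega)
          push_neg at hbnot
          rw [hb] at hc
          have hb0 : a0 ≤ b := by omega
          exact ⟨b, by rw [hS]; exact ⟨hbnot, le_trans hc.le (key2 b hb0)⟩⟩
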